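/- Every finite group G of composite order has a proper subgroup H with |H|² ≥ |G|, provided G is solvable. (Solvable case of the Feit–Kantor–Liebeck theorem.) -/

import Mathlib

/-- Every finite solvable group of composite order has a proper subgroup `H` with
`|H|² ≥ |G|`. -/
theorem stmt_7 {G : Type*} [Group G] [Finite G] [Group.IsSolvable G]
    (h1 : Nat.card G ≠ 1) (hcomp : ¬ (Nat.card G).Prime) :
    ∃ H : Subgroup G, H ≠ ⊤ ∧ Nat.card G ≤ Nat.card H ^ 2 := by
  have hnt : Nontrivial G := by
    have := Nat.card_pos (α := G)
    rw [← Finite.one_lt_card_iff_nontrivial]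
    omega
  -- set of proper normal subgroups
  set S : Set (Subgroup G) := {N | N.Normal ∧ N ≠ ⊤} with hS
  have hbot : (⊥ : Subgroup G) ∈ S := ⟨inferInstance, bot_ne_top⟩
  obtain ⟨N, hNS, hNmax⟩ : ∃ N ∈ S, ∀ a' ∈ S, id N ≤ id a' → id N = id a' := by
    obtain ⟨N, hN⟩ := (Set.toFinite S).exists_maximal ⟨⊥, hbot⟩
    exact ⟨N, hN.1, fun a' ha' hle => le_antisymm hle (hN.2 ha' hle)⟩
  simp only [id] at hNmax
  obtain ⟨hNnorm, hNtop⟩ := hNS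
  haveI := hNnorm
  -- quotient is nontrivial
  have hsurj : Function.Surjective (QuotientGroup.mk' N) := QuotientGroup.mk'_surjective N
  haveI : Nontrivial (G ⧸ N) := by
    rcases subsingleton_or_nontrivial (G ⧸ N) with h | h
    · exact absurd ((Subgroup.eq_top_iff' N).mpr fun g =>
        (QuotientGroup.eq_one_iff g).mp (Subsingleton.elim _ _)) hNtop
    · exact h
  -- quotient is simple
  haveI hsimple : IsSimpleGroup (G ⧸ N) := by
    constructor
    intro M hM
    have hc : (M.comap (QuotientGroup.mk' N)).Normal := hM.comap _
    by_cases htop : M.comap (QuotientGroup.mk' N) = ⊤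
    · right
      rw [← Subgroup.map_comap_eq_self_of_surjective hsurj M, htop]
      exact Subgroup.map_top_of_surjective _ hsurj
    · left
      have hle : N ≤ M.comap (QuotientGroup.mk' N) := by
        intro x hx
        rw [Subgroup.mem_comap]
        show ((x : G ⧸ N)) ∈ M
        rw [(QuotientGroup.eq_one_iff x).mpr hx]
        exact M.one_mem
      have heq := hNmax _ ⟨hc, htop⟩ hle
      rw [← Subgroup.map_comap_eq_self_of_surjective hsurj M, ← heq]
      rw [Subgroup.map_eq_bot_iff, QuotientGroup.ker_mk']
  -- quotient is solvable and simple, hence abelian of prime order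
  letI cg : CommGroup (G ⧸ N) :=
    { (inferInstance : Group (G ⧸ N)) with
      mul_comm := IsSimpleGroup.comm_iff_isSolvable.mpr inferInstance }
  have hr : (Nat.card (G ⧸ N)).Prime := @IsSimpleGroup.prime_card (G ⧸ N) cg hsimple
  set r := Nat.card (G ⧸ N) with hrdef
  have hcard : Nat.card G = r * Nat.card N := Subgroup.card_eq_card_quotient_mul_card_subgroup N
  have hNpos : 0 < Nat.card N := Nat.card_pos
  rcases le_or_gt r (Nat.card N) with hle | hlt
  · exact ⟨N, hNtop, by rw [hcard, sq]; exact Nat.mul_le_mul_right _ hle⟩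
  · -- Cauchy: element of order r
    haveI : Fact r.Prime := ⟨hr⟩
    haveI : Fintype G := Fintype.ofFinite G
    have hrdvd : r ∣ Fintype.card G := by
      rw [← Nat.card_eq_fintype_card, hcard]; exact Dvd.intro _ rfl
    obtain ⟨g, hg⟩ := exists_prime_orderOf_dvd_card r hrdvd
    refine ⟨Subgroup.zpowers g, ?_, ?_⟩
    · intro htop
      apply hcomp
      have : Nat.card G = r := by
        rw [← hg, ← Nat.card_zpowers, htop, Nat.card_eq_fintype_card,
          Subgroup.card_top, Nat.card_eq_fintype_card]
      rwa [this]
    · rw [Nat.card_zpowers, hg, hcard, sq]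
      exact Nat.mul_le_mul_left r hlt.le
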